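/- Let G=(X,w,κ,μ) be a graph, 1≤p<∞, with condition (C_p) assumed if p>1, and let f satisfy (F1) or (F2). Fix an increasing exhaustion {X_n} of X by finite subsets and let Ω_p be the associated set. Then C_c(X) ⊆ Ω_p ⊆ dom_p(𝒜), and consequently the closures of Ω_p and of dom_p(𝒜) in ℓ^p(X,μ) both equal ℓ^p(X,μ). -/

import Mathlib

open Filter Topology MeasureTheory

/-- A weighted graph `G = (X, w, κ, μ)`. -/
structure WGraph (X : Type*) where
  w : X → X → ℝ
  kap : X → ℝ
  mu : X → ℝ
  w_nonneg : ∀ x y, 0 ≤ w x y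
  w_symm : ∀ x y, w x y = w y x
  w_loopless : ∀ x, w x x = 0
  w_summable : ∀ x, Summable (fun y => w x y)
  kap_nonneg : ∀ x, 0 ≤ kap x
  mu_pos : ∀ x, 0 < mu x

namespace WGraph

variable {X : Type*}

/-- Adjacency: `x ∼ y` iff `w x y > 0`. -/
def Adj (G : WGraph X) (x y : X) : Prop := 0 < G.w x y

/-- `G` is connected: any two nodes are joined by a finite walk. -/
def Connected (G : WGraph X) : Prop := ∀ x y : X, Relation.ReflTransGen G.Adj x y

/-- An infinite path: injective sequence of consecutively adjacent nodes. -/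
def InfinitePath (G : WGraph X) (γ : ℕ → X) : Prop :=
  Function.Injective γ ∧ ∀ n, G.Adj (γ n) (γ (n + 1))

/-- Condition (IP): every infinite path has infinite total measure. -/
def CondIP (G : WGraph X) : Prop :=
  ∀ γ : ℕ → X, G.InfinitePath γ → ¬ Summable (fun n => G.mu (γ n))

/-- Condition (B): bounded edge degree. -/
def CondB (G : WGraph X) : Prop :=
  ∃ C : ℝ, ∀ x, (∑' y, G.w x y) / G.mu x ≤ C

/-- Condition (C_p). -/
def CondCp (G : WGraph X) (p : ℝ) : Prop :=
  ∀ x, Summable (fun y => G.w x y ^ p / G.mu y ^ (p - 1))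

/-- Membership in `ℓ^p(X,μ)` for `1 ≤ p < ∞`. -/
def memLp (G : WGraph X) (p : ℝ) (u : X → ℝ) : Prop :=
  Summable (fun x => |u x| ^ p * G.mu x)

/-- The `ℓ^p(X,μ)`-norm. -/
noncomputable def lpNorm (G : WGraph X) (p : ℝ) (u : X → ℝ) : ℝ :=
  (∑' x, |u x| ^ p * G.mu x) ^ (1 / p)

/-- Membership in the formal domain of the graph Laplacian. -/
def inDomLap (G : WGraph X) (u : X → ℝ) : Prop :=
  ∀ x, Summable (fun y => G.w x y * |u y|)

/-- The formal graph Laplacian. -/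
noncomputable def lap (G : WGraph X) (u : X → ℝ) (x : X) : ℝ :=
  (1 / G.mu x) * ∑' y, G.w x y * (u x - u y) + (G.kap x / G.mu x) * u x

/-- The nonlinear operator `𝒜 u = -f ∘ u + Δ u`. -/
noncomputable def Aop (G : WGraph X) (f : ℝ → ℝ) (u : X → ℝ) (x : X) : ℝ :=
  -f (u x) + G.lap u x

/-- `dom_p(𝒜)`. -/
def inDomA (G : WGraph X) (f : ℝ → ℝ) (p : ℝ) (u : X → ℝ) : Prop :=
  G.memLp p u ∧ G.inDomLap u ∧ G.memLp p (G.Aop f u)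

end WGraph

/-- Condition (F1): `f` continuous, monotone decreasing, `f 0 = 0`. -/
def CondF1 (f : ℝ → ℝ) : Prop := Continuous f ∧ Antitone f ∧ f 0 = 0

/-- Condition (F2): `f` uniformly Lipschitz with constant `L > 0`, `f 0 = 0`. -/
def CondF2 (f : ℝ → ℝ) (L : ℝ) : Prop :=
  0 < L ∧ (∀ s t : ℝ, |f t - f s| ≤ L * |t - s|) ∧ f 0 = 0
namespace WGraph

variable {X : Type*}

/-- The Dirichlet Laplacian of the Dirichlet subgraph on `Y ⊆ X`, applied to the
restriction to `Y` of a function on `X` (extended by zero outside `Y`). -/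
noncomputable def lapDir (G : WGraph X) (Y : Set X) (u : X → ℝ) (x : X) : ℝ :=
  (1 / G.mu x) * (∑' y : Y, G.w x y.1 * (u x - u y.1))
    + ((G.kap x + ∑' z : ↥(Yᶜ), G.w x z.1) / G.mu x) * u x

-- The approximating operator `𝒜_n = i_n (F + Δ_{dir,n}) π_n` on the Dirichlet
-- subgraph with node set `Y`.
open Classical in
noncomputable def AopDir (G : WGraph X) (f : ℝ → ℝ) (Y : Set X) (u : X → ℝ) (x : X) : ℝ :=
  if x ∈ Y then -f (u x) + G.lapDir Y u x else 0

open Filter Topology in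
/-- The set `Ω_p` associated with the exhaustion `Xn`. -/
def OmegaP (G : WGraph X) (f : ℝ → ℝ) (p : ℝ) (Xn : ℕ → Set X) : Set (X → ℝ) :=
  {u | G.inDomA f p u ∧ ∃ un : ℕ → X → ℝ,
    (∀ n, Function.support (un n) ⊆ Xn n) ∧
    Tendsto (fun n => G.lpNorm p (fun x => un n x - u x)) atTop (nhds 0) ∧
    Tendsto (fun n => G.lpNorm p (fun x => G.AopDir f (Xn n) (un n) x - G.Aop f u x))
      atTop (nhds 0)}

end WGraph


namespace WGraph

variable {X : Type*} (G : WGraph X)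

lemma memLp_of_finite' {p : ℝ} (hp : 1 ≤ p) {u : X → ℝ}
    (hu : (Function.support u).Finite) : G.memLp p u := by
  have hp' : p ≠ 0 := ne_of_gt (lt_of_lt_of_le one_pos hp)
  apply summable_of_ne_finset_zero (s := hu.toFinset)
  intro x hx
  have hx0 : u x = 0 := by
    by_contra h
    exact hx (hu.mem_toFinset.2 h)
  simp [hx0, Real.zero_rpow hp']

lemma rpow_add_le' {p : ℝ} (hp : 1 ≤ p) {a b : ℝ} (ha : 0 ≤ a) (hb : 0 ≤ b) :
    (a + b) ^ p ≤ 2 ^ p * (a ^ p + b ^ p) := by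
  have hp0 : (0:ℝ) ≤ p := by linarith
  have h1 : a + b ≤ 2 * max a b := by
    rcases le_total a b with h | h
    · rw [max_eq_right h]; linarith
    · rw [max_eq_left h]; linarith
  have h2 : (a + b) ^ p ≤ (2 * max a b) ^ p :=
    Real.rpow_le_rpow (by positivity) h1 hp0
  rw [Real.mul_rpow (by norm_num) (le_max_iff.2 (Or.inl ha))] at h2
  refine h2.trans (mul_le_mul_of_nonneg_left ?_ (Real.rpow_nonneg (by norm_num) p))
  rcases le_total a b with h | h
  · rw [max_eq_right h]; nlinarith [Real.rpow_nonneg ha p, Real.rpow_nonneg hb p]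
  · rw [max_eq_left h]; nlinarith [Real.rpow_nonneg ha p, Real.rpow_nonneg hb p]

lemma memLp_add' {p : ℝ} (hp : 1 ≤ p) {u v : X → ℝ} (hu : G.memLp p u) (hv : G.memLp p v) :
    G.memLp p (fun x => u x + v x) := by
  refine Summable.of_nonneg_of_le
    (f := fun x => 2 ^ p * (|u x| ^ p * G.mu x + |v x| ^ p * G.mu x))
    (fun x => mul_nonneg (Real.rpow_nonneg (abs_nonneg _) _) (G.mu_pos x).le)
    (fun x => ?_) ((hu.add hv).mul_left _)
  dsimp only
  have h1 : |u x + v x| ^ p ≤ (|u x| + |v x|) ^ p :=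
    Real.rpow_le_rpow (abs_nonneg _) (abs_add_le _ _) (by linarith)
  have h2 := rpow_add_le' hp (abs_nonneg (u x)) (abs_nonneg (v x))
  calc |u x + v x| ^ p * G.mu x ≤ (2 ^ p * (|u x| ^ p + |v x| ^ p)) * G.mu x :=
        mul_le_mul_of_nonneg_right (h1.trans h2) (G.mu_pos x).le
    _ = 2 ^ p * (|u x| ^ p * G.mu x + |v x| ^ p * G.mu x) := by ring

lemma memLp_zero' {p : ℝ} (hp : 1 ≤ p) : G.memLp p (fun _ => 0) := by
  have hp' : p ≠ 0 := ne_of_gt (lt_of_lt_of_le one_pos hp)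
  unfold memLp
  simpa [Real.zero_rpow hp'] using summable_zero

lemma memLp_sum' {p : ℝ} (hp : 1 ≤ p) {ι : Type*} (s : Finset ι) (v : ι → X → ℝ)
    (h : ∀ i ∈ s, G.memLp p (v i)) : G.memLp p (fun x => ∑ i ∈ s, v i x) := by
  classical
  induction s using Finset.induction_on with
  | empty => simpa using G.memLp_zero' hp
  | @insert a s hns ih =>
    have h1 : G.memLp p (fun x => v a x + ∑ i ∈ s, v i x) :=
      G.memLp_add' hp (h a (Finset.mem_insert_self a s))
        (ih (fun i hi => h i (Finset.mem_insert_of_mem hi)))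
    refine h1.congr (fun x => ?_)
    dsimp only
    rw [Finset.sum_insert hns]

lemma condCp_of' {p : ℝ} (hp : 1 ≤ p) (hCp : 1 < p → G.CondCp p) : G.CondCp p := by
  rcases eq_or_lt_of_le hp with h | h
  · subst h
    intro x
    simpa [Real.rpow_one, Real.rpow_zero] using G.w_summable x
  · exact hCp h

lemma exists_subset_exhaustion' {Xn : ℕ → Set X} (hmono : Monotone Xn)
    (hexh : (⋃ n, Xn n) = Set.univ) {s : Set X} (hs : s.Finite) : ∃ n, s ⊆ Xn n := by
  have hall : ∀ x : X, ∃ n, x ∈ Xn n := by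
    intro x
    have hx : x ∈ ⋃ n, Xn n := by rw [hexh]; trivial
    exact Set.mem_iUnion.1 hx
  choose g hg using hall
  refine ⟨hs.toFinset.sup g, fun x hx => ?_⟩
  exact hmono (Finset.le_sup (hs.mem_toFinset.2 hx)) (hg x)

lemma tendsto_tail' (g : X → ℝ) {Xn : ℕ → Set X} (hfin : ∀ n, (Xn n).Finite)
    (hmono : Monotone Xn) (hexh : (⋃ n, Xn n) = Set.univ) :
    Tendsto (fun n => ∑' x, ((Xn n)ᶜ).indicator g x) atTop (nhds 0) := by
  have h1 : Tendsto (fun n => (hfin n).toFinset) atTop atTop := by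
    apply tendsto_atTop_atTop_of_monotone
    · intro m n hmn x hx
      exact (hfin n).mem_toFinset.2 (hmono hmn ((hfin m).mem_toFinset.1 hx))
    · intro F
      obtain ⟨n, hn⟩ := exists_subset_exhaustion' hmono hexh F.finite_toSet
      exact ⟨n, fun x hx => (hfin n).mem_toFinset.2 (hn hx)⟩
  have h2 := (tendsto_tsum_compl_atTop_zero g).comp h1
  refine h2.congr (fun n => ?_)
  have hset : {x | x ∉ (hfin n).toFinset} = (Xn n)ᶜ := by
    ext x; simp [Set.Finite.mem_toFinset]
  calc ∑' b : {x // x ∉ (hfin n).toFinset}, g ↑b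
      = ∑' x, Set.indicator {x | x ∉ (hfin n).toFinset} g x := tsum_subtype _ g
    _ = ∑' x, ((Xn n)ᶜ).indicator g x := by rw [hset]

lemma tendsto_rpow_zero' {p : ℝ} (hp : 1 ≤ p) {a : ℕ → ℝ} (ha : Tendsto a atTop (nhds 0)) :
    Tendsto (fun n => a n ^ (1 / p)) atTop (nhds 0) := by
  have hq : (0:ℝ) < 1 / p := by
    apply one_div_pos.2; linarith
  have hc : ContinuousAt (fun t : ℝ => t ^ (1 / p)) 0 :=
    Real.continuousAt_rpow_const 0 (1 / p) (Or.inr hq.le)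
  have h0 : (0:ℝ) ^ (1 / p) = 0 := Real.zero_rpow hq.ne'
  have h2 := hc.tendsto.comp ha
  rw [h0] at h2
  exact h2.congr (fun n => rfl)

lemma aux_rpow' {p : ℝ} (hp : 1 ≤ p) {m : ℝ} (hm : 0 < m) {w : ℝ} (hw : 0 ≤ w) (c : ℝ) :
    |(-((1 / m) * (w * c)))| ^ p * m = |c| ^ p * (w ^ p / m ^ (p - 1)) := by
  have h1 : |(-((1 / m) * (w * c)))| = (1 / m) * (w * |c|) := by
    rw [abs_neg, abs_mul, abs_mul, abs_of_nonneg (by positivity : (0:ℝ) ≤ 1 / m),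
      abs_of_nonneg hw]
  rw [h1, Real.mul_rpow (by positivity) (by positivity),
    Real.mul_rpow hw (abs_nonneg c),
    Real.div_rpow (by norm_num) hm.le p, Real.one_rpow, Real.rpow_sub hm, Real.rpow_one]
  have hmp : m ^ p ≠ 0 := ne_of_gt (Real.rpow_pos_of_pos hm p)
  field_simp

lemma inDomLap_of_finite' {u : X → ℝ} (hu : (Function.support u).Finite) :
    G.inDomLap u := by
  intro x
  apply summable_of_ne_finset_zero (s := hu.toFinset)
  intro y hy
  have : u y = 0 := by
    by_contra h
    exact hy (hu.mem_toFinset.2 h)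
  simp [this]

lemma summable_mul_u {u : X → ℝ} (hu : (Function.support u).Finite) (x : X) :
    Summable (fun y => G.w x y * u y) := by
  apply summable_of_ne_finset_zero (s := hu.toFinset)
  intro y hy
  have : u y = 0 := by
    by_contra h
    exact hy (hu.mem_toFinset.2 h)
  simp [this]

lemma summable_lap_term {u : X → ℝ} (hu : (Function.support u).Finite) (x : X) :
    Summable (fun y => G.w x y * (u x - u y)) := by
  have h := ((G.w_summable x).mul_right (u x)).sub (G.summable_mul_u hu x)
  exact h.congr (fun y => by ring)

lemma aop_pointwise' (f : ℝ → ℝ) {u : X → ℝ} (hu : (Function.support u).Finite) (x : X) :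
    G.Aop f u x = (-f (u x) + (1 / G.mu x) * ((∑' y, G.w x y) * u x)
        + (G.kap x / G.mu x) * u x)
      + ∑ y ∈ hu.toFinset, (-((1 / G.mu x) * (G.w x y * u y))) := by
  have S1 : Summable (fun y => G.w x y * u x) := (G.w_summable x).mul_right _
  have S2 : Summable (fun y => G.w x y * u y) := G.summable_mul_u hu x
  have h1 : ∑' y, G.w x y * (u x - u y)
      = (∑' y, G.w x y) * u x - ∑ y ∈ hu.toFinset, G.w x y * u y := by
    rw [tsum_congr (fun y => by ring :
        ∀ y, G.w x y * (u x - u y) = G.w x y * u x - G.w x y * u y),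
      S1.tsum_sub S2, tsum_mul_right]
    congr 1
    apply tsum_eq_sum
    intro y hy
    have : u y = 0 := by
      by_contra h
      exact hy (hu.mem_toFinset.2 h)
    simp [this]
  have h2 : ∑ y ∈ hu.toFinset, (-((1 / G.mu x) * (G.w x y * u y)))
      = -((1 / G.mu x) * ∑ y ∈ hu.toFinset, G.w x y * u y) := by
    rw [Finset.mul_sum, ← Finset.sum_neg_distrib]
  unfold Aop lap
  rw [h1, h2]
  ring

lemma memLp_Aop' {p : ℝ} (hp : 1 ≤ p) (hC : G.CondCp p) {f : ℝ → ℝ} (hf0 : f 0 = 0)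
    {u : X → ℝ} (hu : (Function.support u).Finite) : G.memLp p (G.Aop f u) := by
  have hmem1 : G.memLp p (fun x => -f (u x) + (1 / G.mu x) * ((∑' y, G.w x y) * u x)
      + (G.kap x / G.mu x) * u x) := by
    apply G.memLp_of_finite' hp
    apply hu.subset
    intro x hx
    by_contra h
    have hux : u x = 0 := Function.notMem_support.1 h
    apply hx
    simp [hux, hf0]
  have hmem2 : G.memLp p (fun x => ∑ y ∈ hu.toFinset,
      (-((1 / G.mu x) * (G.w x y * u y)))) := by
    apply G.memLp_sum' hp
    intro y _
    have hsum : Summable (fun x => G.w x y ^ p / G.mu x ^ (p - 1)) :=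
      (hC y).congr (fun x => by rw [G.w_symm])
    have hsum2 : Summable (fun x => |u y| ^ p * (G.w x y ^ p / G.mu x ^ (p - 1))) :=
      hsum.mul_left _
    exact hsum2.congr (fun x =>
      (aux_rpow' hp (G.mu_pos x) (G.w_nonneg x y) (u y)).symm)
  have := G.memLp_add' hp hmem1 hmem2
  exact this.congr (fun x => by
    dsimp only
    rw [← G.aop_pointwise' f hu x])

lemma lpNorm_zero' {p : ℝ} (hp : 1 ≤ p) : G.lpNorm p (fun _ => 0) = 0 := by
  have hp' : p ≠ 0 := ne_of_gt (lt_of_lt_of_le one_pos hp)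
  have hq : (1 / p) ≠ 0 := by
    apply ne_of_gt
    apply one_div_pos.2
    linarith
  unfold lpNorm
  rw [tsum_congr (fun x => by simp [Real.zero_rpow hp'] :
    ∀ x : X, |(0:ℝ)| ^ p * G.mu x = 0), tsum_zero, Real.zero_rpow hq]

lemma aopDir_eq' (f : ℝ → ℝ) {Y : Set X} {u : X → ℝ}
    (hu : (Function.support u).Finite) (hsub : Function.support u ⊆ Y)
    {x : X} (hx : x ∈ Y) :
    G.AopDir f Y u x = G.Aop f u x := by
  unfold AopDir Aop lapDir lap
  rw [if_pos hx]
  have hsum : Summable (fun y => G.w x y * (u x - u y)) := G.summable_lap_term hu x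
  have hsplit := Summable.tsum_add_tsum_compl (f := fun y => G.w x y * (u x - u y))
    (hsum.subtype Y) (hsum.subtype Yᶜ)
  have hcompl : ∑' z : ↥Yᶜ, G.w x z.1 * (u x - u z.1)
      = (∑' z : ↥Yᶜ, G.w x z.1) * u x := by
    rw [← tsum_mul_right]
    apply tsum_congr
    intro z
    have hz : u z.1 = 0 := by
      by_contra h
      exact z.2 (hsub (Function.mem_support.2 h))
    rw [hz, sub_zero]
  rw [← hsplit, hcompl]
  have hmu : G.mu x ≠ 0 := ne_of_gt (G.mu_pos x)
  field_simp
  ring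

end WGraph

/-- `C_c(X) ⊆ Ω_p ⊆ dom_p(𝒜)`, and both `Ω_p` and `dom_p(𝒜)` are
dense in `ℓ^p(X,μ)`. -/
theorem stmt8 {X : Type*} [Countable X] (G : WGraph X) (f : ℝ → ℝ) (p : ℝ)
    (hp : 1 ≤ p) (hCp : 1 < p → G.CondCp p)
    (hf : CondF1 f ∨ ∃ L, CondF2 f L)
    (Xn : ℕ → Set X) (hfin : ∀ n, (Xn n).Finite) (hmono : Monotone Xn)
    (hexh : (⋃ n, Xn n) = Set.univ) :
    {u : X → ℝ | (Function.support u).Finite} ⊆ G.OmegaP f p Xn ∧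
    G.OmegaP f p Xn ⊆ {u : X → ℝ | G.inDomA f p u} ∧
    (∀ v : X → ℝ, G.memLp p v → ∀ ε > 0, ∃ u ∈ G.OmegaP f p Xn,
      G.lpNorm p (fun x => v x - u x) < ε) ∧
    (∀ v : X → ℝ, G.memLp p v → ∀ ε > 0, ∃ u : X → ℝ, G.inDomA f p u ∧
      G.lpNorm p (fun x => v x - u x) < ε) := by
  classical
  have hp0 : (0:ℝ) < p := lt_of_lt_of_le one_pos hp
  have hpne : p ≠ 0 := ne_of_gt hp0
  have hf0 : f 0 = 0 := by
    rcases hf with ⟨_, _, h⟩ | ⟨L, _, _, h⟩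
    · exact h
    · exact h
  have hC : G.CondCp p := G.condCp_of' hp hCp
  have hCc : {u : X → ℝ | (Function.support u).Finite} ⊆ G.OmegaP f p Xn := by
    intro u hu
    have hufin : (Function.support u).Finite := hu
    have hdom : G.inDomA f p u :=
      ⟨G.memLp_of_finite' hp hufin, G.inDomLap_of_finite' hufin,
        G.memLp_Aop' hp hC hf0 hufin⟩
    obtain ⟨N, hN⟩ := WGraph.exists_subset_exhaustion' hmono hexh hufin
    have hind : ∀ n, N ≤ n → (Xn n).indicator u = u := fun n hn =>
      Set.indicator_eq_self.2 (hN.trans (hmono hn))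
    refine ⟨hdom, fun n => (Xn n).indicator u,
      fun n => Set.support_indicator_subset, ?_, ?_⟩
    · refine Tendsto.congr' ?_ tendsto_const_nhds
      filter_upwards [eventually_ge_atTop N] with n hn
      have hfun : (fun x => (Xn n).indicator u x - u x) = fun _ => (0:ℝ) := by
        funext x
        rw [congrFun (hind n hn) x, sub_self]
      rw [hfun, G.lpNorm_zero' hp]
    · have hT := WGraph.tendsto_rpow_zero' hp
        (WGraph.tendsto_tail' (fun x => |G.Aop f u x| ^ p * G.mu x) hfin hmono hexh)
      refine Tendsto.congr' ?_ hT
      filter_upwards [eventually_ge_atTop N] with n hn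
      rw [hind n hn]
      unfold WGraph.lpNorm
      congr 1
      apply tsum_congr
      intro x
      by_cases hx : x ∈ Xn n
      · rw [Set.indicator_of_notMem (by simpa using hx)]
        dsimp only
        rw [G.aopDir_eq' f hufin (hN.trans (hmono hn)) hx, sub_self]
        simp [Real.zero_rpow hpne]
      · rw [Set.indicator_of_mem (by simpa using hx)]
        dsimp only
        have h0 : G.AopDir f (Xn n) u x = 0 := by
          unfold WGraph.AopDir
          rw [if_neg hx]
        rw [h0, zero_sub, abs_neg]
  have hsub : G.OmegaP f p Xn ⊆ {u : X → ℝ | G.inDomA f p u} := fun u hu => hu.1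
  have hdense : ∀ v : X → ℝ, G.memLp p v → ∀ ε > 0, ∃ u ∈ G.OmegaP f p Xn,
      G.lpNorm p (fun x => v x - u x) < ε := by
    intro v hv ε hε
    have hT := WGraph.tendsto_rpow_zero' hp
      (WGraph.tendsto_tail' (fun x => |v x| ^ p * G.mu x) hfin hmono hexh)
    obtain ⟨N, hN⟩ := (hT.eventually_lt_const hε).exists
    refine ⟨(Xn N).indicator v, hCc ((hfin N).subset Set.support_indicator_subset), ?_⟩
    have heq : G.lpNorm p (fun x => v x - (Xn N).indicator v x)
        = (∑' x, ((Xn N)ᶜ).indicator (fun x => |v x| ^ p * G.mu x) x) ^ (1 / p) := by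
      unfold WGraph.lpNorm
      congr 1
      apply tsum_congr
      intro x
      dsimp only
      by_cases hx : x ∈ Xn N
      · rw [Set.indicator_of_mem hx, Set.indicator_of_notMem (by simpa using hx), sub_self]
        simp [Real.zero_rpow hpne]
      · rw [Set.indicator_of_notMem hx, Set.indicator_of_mem (by simpa using hx), sub_zero]
    rw [heq]
    exact hN
  refine ⟨hCc, hsub, hdense, ?_⟩
  intro v hv ε hε
  obtain ⟨u, huΩ, hlt⟩ := hdense v hv ε hε
  exact ⟨u, huΩ.1, hlt⟩
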